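/- arXiv:2310.20219 — 8 statements merged into one kernel-verified Lean document; each statement's English description precedes it below -/
import Mathlib

section
/- Let q be a complex number with q^6 ≠ 1 and let n be a nonnegative integer. Then Σ_{k=1}^{n} q^{6n−6k} · [2k]_q · [2k+1]_q · [2k+2]_q · [2k+3]_q · [4k+3]_q = ( [2n]_q · [2n+1]_q · [2n+2]_q · [2n+3]_q · [2n+4]_q · [2n+5]_q ) / [6]_q. -/
open BigOperators Finset

/-- The q-number `[m]_q = (1 - q^m)/(1 - q)`. -/
noncomputable def qNum (q : ℂ) (m : ℕ) : ℂ := (1 - q ^ m) / (1 - q)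

set_option maxHeartbeats 1000000 in
private lemma q_analogue_six_step (q : ℂ) (hd : (1:ℂ) - q ≠ 0) (h6 : (1:ℂ) - q^6 ≠ 0) (n : ℕ) :
    q ^ 6 * (qNum q (2 * n) * qNum q (2 * n + 1) * qNum q (2 * n + 2) * qNum q (2 * n + 3) *
        qNum q (2 * n + 4) * qNum q (2 * n + 5) / qNum q 6)
      + qNum q (2 * (n + 1)) * qNum q (2 * (n + 1) + 1) * qNum q (2 * (n + 1) + 2) *
          qNum q (2 * (n + 1) + 3) * qNum q (4 * (n + 1) + 3) =
    qNum q (2 * (n + 1)) * qNum q (2 * (n + 1) + 1) * qNum q (2 * (n + 1) + 2) *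
        qNum q (2 * (n + 1) + 3) * qNum q (2 * (n + 1) + 4) * qNum q (2 * (n + 1) + 5) /
      qNum q 6 := by
  have key : q ^ 6 * ((1 - q^(2*n)) * (1 - q^(2*n+1)) * (1 - q^(2*n+2)) * (1 - q^(2*n+3)) *
        (1 - q^(2*n+4)) * (1 - q^(2*n+5)))
      + (1 - q^6) * ((1 - q^(2*(n+1))) * (1 - q^(2*(n+1)+1)) * (1 - q^(2*(n+1)+2)) *
        (1 - q^(2*(n+1)+3)) * (1 - q^(4*(n+1)+3)))
      = (1 - q^(2*(n+1))) * (1 - q^(2*(n+1)+1)) * (1 - q^(2*(n+1)+2)) * (1 - q^(2*(n+1)+3)) *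
        (1 - q^(2*(n+1)+4)) * (1 - q^(2*(n+1)+5)) := by ring
  have hq6 : qNum q 6 ≠ 0 := div_ne_zero h6 hd
  rw [eq_div_iff hq6, add_mul, mul_assoc, div_mul_cancel₀ _ hq6]
  simp only [qNum, div_mul_div_comm]
  rw [mul_div_assoc']
  rw [div_add_div _ _ (by simp [hd]) (by simp [hd]), div_eq_div_iff (by simp [hd]) (by simp [hd])]
  linear_combination
    ((1-q)*(1-q)*(1-q)*(1-q)*(1-q)*(1-q)*(1-q)*(1-q)*(1-q)*(1-q)*(1-q)*(1-q)) * key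

theorem q_analogue_six (q : ℂ) (hq : q ^ 6 ≠ 1) (n : ℕ) :
    ∑ k ∈ Finset.Icc 1 n,
        q ^ (6 * n - 6 * k) * qNum q (2 * k) * qNum q (2 * k + 1) * qNum q (2 * k + 2) *
          qNum q (2 * k + 3) * qNum q (4 * k + 3) =
      qNum q (2 * n) * qNum q (2 * n + 1) * qNum q (2 * n + 2) * qNum q (2 * n + 3) *
        qNum q (2 * n + 4) * qNum q (2 * n + 5) / qNum q 6 := by
  have hq1 : q ≠ 1 := by rintro rfl; simp at hq
  have hd : (1 : ℂ) - q ≠ 0 := sub_ne_zero.mpr hq1.symm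
  have h6 : (1 : ℂ) - q ^ 6 ≠ 0 := sub_ne_zero.mpr (Ne.symm hq)
  induction n with
  | zero => simp [qNum]
  | succ n ih =>
      rw [Finset.sum_Icc_succ_top (Nat.le_add_left 1 n)]
      have hrw : ∀ k ∈ Finset.Icc 1 n,
          q ^ (6 * (n + 1) - 6 * k) * qNum q (2 * k) * qNum q (2 * k + 1) * qNum q (2 * k + 2) *
            qNum q (2 * k + 3) * qNum q (4 * k + 3) =
          q ^ 6 * (q ^ (6 * n - 6 * k) * qNum q (2 * k) * qNum q (2 * k + 1) * qNum q (2 * k + 2) *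
            qNum q (2 * k + 3) * qNum q (4 * k + 3)) := by
        intro k hk
        rw [Finset.mem_Icc] at hk
        have h1 : 6 * (n + 1) - 6 * k = 6 * n - 6 * k + 6 := by omega
        rw [h1, pow_add]
        ring
      rw [Finset.sum_congr rfl hrw, ← Finset.mul_sum, ih]
      have e1 : 6 * (n + 1) - 6 * (n + 1) = 0 := by omega
      rw [e1, pow_zero, one_mul]
      exact q_analogue_six_step q hd h6 n
end

section
/- (Euler's telescoping lemma.) Let F be a field, let n be a nonnegative integer, and let u, v : ℕ → F be sequences; set t_k := u_k − v_k for each k. Assume t_0 ≠ 0, u_0 ≠ 0, and v_k ≠ 0 for all 1 ≤ k ≤ n. Then Σ_{k=0}^{n} (t_k / t_0) · ( (Π_{j=0}^{k−1} u_j) / (Π_{j=1}^{k} v_j) ) = (u_0 / t_0) · ( (Π_{j=1}^{n} u_j) / (Π_{j=1}^{n} v_j) − v_0 / u_0 ). -/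
open BigOperators Finset

lemma range_prod_split {F : Type*} [Field F] (n : ℕ) (u : ℕ → F) :
    ∏ j ∈ Finset.range (n + 1), u j = u 0 * ∏ j ∈ Finset.Icc 1 n, u j := by
  rw [Finset.prod_range_succ', show Finset.Icc 1 n = Finset.Ico 1 (n+1) by rfl,
    Finset.prod_Ico_eq_prod_range]
  simp [mul_comm, add_comm]

/-- Euler's telescoping lemma. -/
theorem euler_telescoping {F : Type*} [Field F] (n : ℕ) (u v : ℕ → F)
    (ht0 : u 0 - v 0 ≠ 0) (hu0 : u 0 ≠ 0)
    (hv : ∀ k : ℕ, 1 ≤ k → k ≤ n → v k ≠ 0) :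
    ∑ k ∈ Finset.range (n + 1),
        ((u k - v k) / (u 0 - v 0)) *
          ((∏ j ∈ Finset.range k, u j) / (∏ j ∈ Finset.Icc 1 k, v j)) =
      (u 0 / (u 0 - v 0)) *
        ((∏ j ∈ Finset.Icc 1 n, u j) / (∏ j ∈ Finset.Icc 1 n, v j) - v 0 / u 0) := by
  induction n with
  | zero =>
    simp only [zero_add, Finset.sum_range_one, Finset.range_zero, Finset.prod_empty,
      show Finset.Icc 1 0 = ∅ from rfl]
    field_simp
  | succ n ih =>
    have hv' : ∀ k : ℕ, 1 ≤ k → k ≤ n → v k ≠ 0 :=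
      fun k h1 h2 => hv k h1 (h2.trans (Nat.le_succ n))
    have hvn : v (n + 1) ≠ 0 := hv _ (by omega) le_rfl
    have hV : (∏ j ∈ Finset.Icc 1 n, v j) ≠ 0 :=
      Finset.prod_ne_zero_iff.mpr fun k hk =>
        hv' k (Finset.mem_Icc.mp hk).1 (Finset.mem_Icc.mp hk).2
    rw [Finset.sum_range_succ, ih hv',
      Finset.prod_Icc_succ_top (by omega : 1 ≤ n + 1) u,
      Finset.prod_Icc_succ_top (by omega : 1 ≤ n + 1) v,
      range_prod_split]
    field_simp
    ring
end

section
/- Let q and a be complex numbers with q ≠ 0, q ≠ 1, aq ≠ 1, and suppose 1 − a q^{2+3j} ≠ 0 for all relevant nonnegative integers j. Then for every positive integer n, Σ_{k=0}^{n−1} q^{−k} · ( (aq; q³)_k / (aq⁵; q³)_k ) · ( (1 − q^{2k+1}) / (1 − q) ) · ( (1 − a q^{2k+1})² / (1 − aq)² ) = ( (1 − q^n)² (1 − a q^n) / ( (1 − q)² (1 − aq) ) ) · ( (a q⁴; q³)_{n−1} / (a q⁵; q³)_{n−1} ) · q^{1−n}. -/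
open BigOperators Finset

/-- The q-shifted factorial `(x; Q)_k = ∏_{j=0}^{k-1} (1 - x Q^j)`. -/
noncomputable def qPoch (x Q : ℂ) (k : ℕ) : ℂ := ∏ j ∈ Finset.range k, (1 - x * Q ^ j)

lemma qPoch_zero (x Q : ℂ) : qPoch x Q 0 = 1 := by simp [qPoch]

lemma qPoch_succ (x Q : ℂ) (k : ℕ) :
    qPoch x Q (k + 1) = qPoch x Q k * (1 - x * Q ^ k) := Finset.prod_range_succ _ _

lemma qPoch_succ' (x Q : ℂ) (k : ℕ) :
    qPoch x Q (k + 1) = (1 - x) * qPoch (x * Q) Q k := by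
  rw [qPoch, Finset.prod_range_succ']
  simp only [pow_zero, mul_one, qPoch]
  rw [mul_comm]
  congr 1
  apply Finset.prod_congr rfl
  intro j _
  ring

set_option maxHeartbeats 1000000 in
lemma cubic_key (q a u A B : ℂ) (hq0 : q ≠ 0) (h1q : (1:ℂ) - q ≠ 0) (h1aq : (1:ℂ) - a*q ≠ 0)
    (hB : B ≠ 0) (hu : u ≠ 0) (h5 : 1 - a*q^5*u^3 ≠ 0) :
    (1 - q*u)^2 * (1 - a*(q*u)) / ((1-q)^2*(1-a*q)) * (A/B) * u⁻¹
      + (q*u)⁻¹ * ((1-a*q)*A / (B*(1 - a*q^5*u^3))) * ((1 - q^3*u^2)/(1-q)) *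
        ((1 - a*(q^3*u^2))^2/(1-a*q)^2)
    = (1 - q^2*u)^2 * (1 - a*(q^2*u)) / ((1-q)^2*(1-a*q)) *
        (A*(1 - a*q^4*u^3)/(B*(1 - a*q^5*u^3))) * (q*u)⁻¹ := by
  simp only [inv_mul_eq_div, ← div_eq_mul_inv, div_mul_div_comm, div_div, div_mul_eq_mul_div,
    ← mul_div_assoc]
  have n1 : ((1 - q) ^ 2 * (1 - a * q) * B * u : ℂ) ≠ 0 :=
    mul_ne_zero (mul_ne_zero (mul_ne_zero (pow_ne_zero 2 h1q) h1aq) hB) hu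
  have n2 : (q * u * (B * (1 - a * q ^ 5 * u ^ 3)) * (1 - q) * (1 - a * q) ^ 2 : ℂ) ≠ 0 :=
    mul_ne_zero (mul_ne_zero (mul_ne_zero (mul_ne_zero hq0 hu) (mul_ne_zero hB h5)) h1q)
      (pow_ne_zero 2 h1aq)
  have n3 : ((1 - q) ^ 2 * (1 - a * q) * (B * (1 - a * q ^ 5 * u ^ 3)) * (q * u) : ℂ) ≠ 0 :=
    mul_ne_zero (mul_ne_zero (mul_ne_zero (pow_ne_zero 2 h1q) h1aq) (mul_ne_zero hB h5))
      (mul_ne_zero hq0 hu)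
  rw [div_add_div _ _ n1 n2, div_eq_div_iff (mul_ne_zero n1 n2) n3]
  ring

theorem cubic_indefinite_sum (q a : ℂ) (hq0 : q ≠ 0) (hq1 : q ≠ 1) (haq : a * q ≠ 1)
    (ha : ∀ j : ℕ, 1 - a * q ^ (2 + 3 * j) ≠ 0) (n : ℕ) (hn : 0 < n) :
    ∑ k ∈ Finset.range n,
        q ^ (-(k : ℤ)) * (qPoch (a * q) (q ^ 3) k / qPoch (a * q ^ 5) (q ^ 3) k) *
          ((1 - q ^ (2 * k + 1)) / (1 - q)) *
          ((1 - a * q ^ (2 * k + 1)) ^ 2 / (1 - a * q) ^ 2) =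
      ((1 - q ^ n) ^ 2 * (1 - a * q ^ n) / ((1 - q) ^ 2 * (1 - a * q))) *
        (qPoch (a * q ^ 4) (q ^ 3) (n - 1) / qPoch (a * q ^ 5) (q ^ 3) (n - 1)) *
        q ^ (1 - (n : ℤ)) := by
  have h1q : (1 : ℂ) - q ≠ 0 := sub_ne_zero.mpr (Ne.symm hq1)
  have h1aq : (1 : ℂ) - a * q ≠ 0 := sub_ne_zero.mpr (Ne.symm haq)
  have hB : ∀ m : ℕ, qPoch (a * q ^ 5) (q ^ 3) m ≠ 0 := by
    intro m
    apply Finset.prod_ne_zero_iff.mpr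
    intro j _
    have h := ha (j + 1)
    have e : a * q ^ 5 * (q ^ 3) ^ j = a * q ^ (2 + 3 * (j + 1)) := by
      rw [show 2 + 3 * (j + 1) = 5 + 3 * j from by ring, pow_add, pow_mul]; ring
    rw [e]; exact h
  induction n, hn using Nat.le_induction with
  | base =>
    simp only [Finset.sum_range_one, qPoch_zero, Nat.cast_one]
    norm_num
    field_simp
    simp [qPoch_zero]
  | succ n hn ih =>
    obtain ⟨m, rfl⟩ : ∃ m, n = m + 1 := ⟨n - 1, (Nat.succ_pred_eq_of_pos hn).symm⟩
    rw [Finset.sum_range_succ, ih]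
    have hq5 : 1 - a * q ^ 5 * ((q : ℂ) ^ m) ^ 3 ≠ 0 := by
      have h := ha (m + 1)
      have e : a * q ^ 5 * ((q : ℂ) ^ m) ^ 3 = a * q ^ (2 + 3 * (m + 1)) := by
        rw [show 2 + 3 * (m + 1) = 5 + m * 3 from by ring, pow_add, ← pow_mul]; ring
      rw [e]; exact h
    simp only [show m + 1 + 1 - 1 = m + 1 from rfl, show m + 1 - 1 = m from rfl]
    rw [qPoch_succ (a * q ^ 4), qPoch_succ (a * q ^ 5),
        show qPoch (a * q) (q ^ 3) (m + 1) = (1 - a * q) * qPoch (a * q ^ 4) (q ^ 3) m from by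
          rw [qPoch_succ']; ring_nf]
    have hz1 : q ^ (1 - ((m : ℤ) + 1)) = (q ^ m)⁻¹ := by
      rw [show 1 - ((m : ℤ) + 1) = -(m : ℤ) from by ring, zpow_neg, zpow_natCast]
    have hz2 : q ^ (1 - ((m : ℤ) + 1 + 1)) = (q * q ^ m)⁻¹ := by
      rw [show 1 - ((m : ℤ) + 1 + 1) = -((m : ℤ) + 1) from by ring, zpow_neg,
        show (m : ℤ) + 1 = ((m + 1 : ℕ) : ℤ) from by push_cast; ring, zpow_natCast, pow_succ]
      ring_nf
    have hz3 : q ^ (-((m : ℤ) + 1)) = (q * q ^ m)⁻¹ := by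
      rw [zpow_neg, show (m : ℤ) + 1 = ((m + 1 : ℕ) : ℤ) from by push_cast; ring,
        zpow_natCast, pow_succ]
      ring_nf
    push_cast
    rw [hz1, hz2, hz3]
    have e1 : q ^ (m + 1) = q * q ^ m := by rw [pow_succ]; ring
    have e2 : q ^ (m + 1 + 1) = q ^ 2 * q ^ m := by rw [pow_succ, pow_succ]; ring
    have e3 : q ^ (2 * (m + 1) + 1) = q ^ 3 * (q ^ m) ^ 2 := by
      rw [show 2 * (m + 1) + 1 = 3 + m * 2 from by ring, pow_add, pow_mul]
    have e4 : (q ^ 3 : ℂ) ^ m = (q ^ m) ^ 3 := by rw [← pow_mul, ← pow_mul, Nat.mul_comm]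
    rw [e1, e2, e3, e4]
    have hBm := hB m
    have hune : (q : ℂ) ^ m ≠ 0 := pow_ne_zero _ hq0
    generalize qPoch (a * q ^ 4) (q ^ 3) m = A
    generalize hBg : qPoch (a * q ^ 5) (q ^ 3) m = B at hBm ⊢
    generalize hug : (q : ℂ) ^ m = u at hq5 hune ⊢
    exact cubic_key q a u A B hq0 h1q h1aq hBm hune hq5
end

section
/- (Warnaar's q-analogue of the sum of the first n cubes.) Let q be a complex number with q² ≠ 1 and let n be a nonnegative integer. Then Σ_{k=1}^{n} q^{2n−2k} · ( [k]_q² · [2k]_q ) / [2]_q = ( [n]_q · [n+1]_q / [2]_q )². -/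
open BigOperators Finset

lemma warnaar_aux (q x : ℂ) (h1 : (1:ℂ) - q ≠ 0) (h2 : (1:ℂ) - q^2 ≠ 0) :
    q ^ 2 * ((1 - x)/(1-q) * ((1 - q*x)/(1-q)) / ((1 - q^2)/(1-q))) ^ 2 +
      ((1 - q*x)/(1-q)) ^ 2 * ((1 - q^2*x^2)/(1-q)) / ((1 - q^2)/(1-q)) =
    ((1 - q*x)/(1-q) * ((1 - q^2*x)/(1-q)) / ((1 - q^2)/(1-q))) ^ 2 := by
  have e : ∀ A B : ℂ, A/(1-q) * (B/(1-q)) / ((1-q^2)/(1-q)) = A*B / ((1-q)*(1-q^2)) := by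
    intro A B; field_simp
  have e2 : ∀ A B : ℂ, (A/(1-q))^2 * (B/(1-q)) / ((1-q^2)/(1-q)) = A^2*B / ((1-q)^2*(1-q^2)) := by
    intro A B; field_simp
  rw [e, e, e2, div_pow, div_pow]
  have hD : ((1-q)*(1-q^2)) ^ 2 ≠ 0 := pow_ne_zero _ (mul_ne_zero h1 h2)
  have hD2 : (1-q)^2*(1-q^2) ≠ 0 := mul_ne_zero (pow_ne_zero _ h1) h2
  rw [← mul_div_assoc, div_add_div _ _ hD hD2, div_eq_div_iff (mul_ne_zero hD hD2) hD]
  ring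

/-- Warnaar's q-analogue of the sum of the first n cubes. -/
theorem warnaar_q_cubes (q : ℂ) (hq : q ^ 2 ≠ 1) (n : ℕ) :
    ∑ k ∈ Finset.Icc 1 n, q ^ (2 * n - 2 * k) * (qNum q k ^ 2 * qNum q (2 * k)) / qNum q 2 =
      (qNum q n * qNum q (n + 1) / qNum q 2) ^ 2 := by
  have hq1 : q ≠ 1 := by rintro rfl; simp at hq
  have h1 : (1 : ℂ) - q ≠ 0 := sub_ne_zero.mpr (Ne.symm hq1)
  have h2 : (1 : ℂ) - q ^ 2 ≠ 0 := sub_ne_zero.mpr (Ne.symm hq)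
  induction n with
  | zero => simp [qNum]
  | succ n ih =>
    rw [Finset.sum_Icc_succ_top (by omega)]
    have hstep : ∀ k ∈ Finset.Icc 1 n,
        q ^ (2 * (n + 1) - 2 * k) * (qNum q k ^ 2 * qNum q (2 * k)) / qNum q 2 =
        q ^ 2 * (q ^ (2 * n - 2 * k) * (qNum q k ^ 2 * qNum q (2 * k)) / qNum q 2) := by
      intro k hk
      simp only [Finset.mem_Icc] at hk
      have : 2 * (n + 1) - 2 * k = 2 + (2 * n - 2 * k) := by omega
      rw [this, pow_add]
      ring
    rw [Finset.sum_congr rfl hstep, ← Finset.mul_sum, ih]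
    have e0 : 2 * (n + 1) - 2 * (n + 1) = 0 := by omega
    have e1 : q ^ (n + 1) = q * q ^ n := by rw [pow_succ]; ring
    have e2 : q ^ (2 * (n + 1)) = q ^ 2 * (q ^ n) ^ 2 := by
      rw [show 2 * (n + 1) = n + n + 2 by ring, pow_add, pow_add]; ring
    have e3 : q ^ (n + 1 + 1) = q ^ 2 * q ^ n := by rw [pow_succ, pow_succ]; ring
    simp only [qNum, e0, e1, e2, e3, pow_zero, one_mul]
    generalize q ^ n = x
    exact warnaar_aux q x h1 h2
end

section
/- (Warnaar's q-analogue of the sum of the first n natural numbers.) Let q be a complex number with q² ≠ 1 and let n be a nonnegative integer. Then Σ_{k=1}^{n} q^{2n−2k} · [k]_q = ( [n]_q · [n+1]_q ) / [2]_q. -/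
open BigOperators Finset

/-- Warnaar's q-analogue of the sum of the first n natural numbers. -/
theorem warnaar_q_triangular (q : ℂ) (hq : q ^ 2 ≠ 1) (n : ℕ) :
    ∑ k ∈ Finset.Icc 1 n, q ^ (2 * n - 2 * k) * qNum q k =
      qNum q n * qNum q (n + 1) / qNum q 2 := by
  have hq1 : q ≠ 1 := by rintro rfl; simp at hq
  have h1 : (1 : ℂ) - q ≠ 0 := sub_ne_zero.mpr (Ne.symm hq1)
  have h2 : (1 : ℂ) - q ^ 2 ≠ 0 := sub_ne_zero.mpr (Ne.symm hq)
  induction n with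
  | zero => simp [qNum]
  | succ n ih =>
    rw [Finset.sum_Icc_succ_top (by omega : 1 ≤ n + 1)]
    have key : ∀ k ∈ Finset.Icc 1 n, q ^ (2 * (n + 1) - 2 * k) * qNum q k
        = q ^ 2 * (q ^ (2 * n - 2 * k) * qNum q k) := by
      intro k hk
      simp only [Finset.mem_Icc] at hk
      rw [← mul_assoc, ← pow_add]
      congr 2
      omega
    rw [Finset.sum_congr rfl key, ← Finset.mul_sum, ih]
    simp only [qNum]
    rw [Nat.sub_self, pow_zero]
    field_simp
    ring
end

section
/- Let q be a complex number with q ≠ 1 and let n be a nonnegative integer. Then Σ_{k=0}^{n} q^{2n−2k} · ( [2]_q · [k+1]_q² · [2k+2]_q − q^{k+1} · [2k+1]_q ) = [n+1]_q³ · [n+3]_q. -/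
open BigOperators Finset

lemma q_key (q A : ℂ) (h1 : (1:ℂ) - q ≠ 0) :
    q ^ 2 * (((1 - A) / (1 - q)) ^ 3 * ((1 - q ^ 2 * A) / (1 - q))) +
      ((1 - q ^ 2) / (1 - q) * ((1 - q * A) / (1 - q)) ^ 2 * ((1 - q ^ 2 * A ^ 2) / (1 - q)) -
        q * A * ((1 - q * A ^ 2) / (1 - q))) =
    ((1 - q * A) / (1 - q)) ^ 3 * ((1 - q ^ 3 * A) / (1 - q)) := by
  have hB : (1 - q) * (1 - q)⁻¹ = 1 := mul_inv_cancel₀ h1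
  simp only [div_eq_mul_inv]
  linear_combination (q * A * (1-q)⁻¹ - q ^ 2 * A ^ 3 * (1-q)⁻¹ + q * A * (1-q)⁻¹ ^ 2
    - q ^ 2 * A * (1-q)⁻¹ ^ 2 - q ^ 2 * A ^ 3 * (1-q)⁻¹ ^ 2 + q ^ 3 * A ^ 3 * (1-q)⁻¹ ^ 2
    + q * A * (1-q)⁻¹ ^ 3 - 2 * q ^ 2 * A * (1-q)⁻¹ ^ 3 - q ^ 2 * A ^ 3 * (1-q)⁻¹ ^ 3
    + q ^ 3 * A * (1-q)⁻¹ ^ 3 + 2 * q ^ 3 * A ^ 3 * (1-q)⁻¹ ^ 3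
    - q ^ 4 * A ^ 3 * (1-q)⁻¹ ^ 3) * hB

theorem q_analogue_a_one (q : ℂ) (hq : q ≠ 1) (n : ℕ) :
    ∑ k ∈ Finset.range (n + 1),
        q ^ (2 * n - 2 * k) *
          (qNum q 2 * qNum q (k + 1) ^ 2 * qNum q (2 * k + 2) - q ^ (k + 1) * qNum q (2 * k + 1)) =
      qNum q (n + 1) ^ 3 * qNum q (n + 3) := by
  have h1 : (1 : ℂ) - q ≠ 0 := sub_ne_zero.mpr (Ne.symm hq)
  induction n with
  | zero =>
    rw [Finset.sum_range_one]
    apply mul_left_cancel₀ (pow_ne_zero 4 h1)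
    simp only [qNum]
    field_simp
    ring
  | succ n ih =>
    rw [Finset.sum_range_succ]
    have hstep : ∀ k ∈ Finset.range (n + 1),
        q ^ (2 * (n + 1) - 2 * k) *
          (qNum q 2 * qNum q (k + 1) ^ 2 * qNum q (2 * k + 2) - q ^ (k + 1) * qNum q (2 * k + 1))
        = q ^ 2 * (q ^ (2 * n - 2 * k) *
          (qNum q 2 * qNum q (k + 1) ^ 2 * qNum q (2 * k + 2) - q ^ (k + 1) * qNum q (2 * k + 1))) := by
      intro k hk
      rw [Finset.mem_range] at hk
      have : 2 * (n + 1) - 2 * k = 2 + (2 * n - 2 * k) := by omega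
      rw [this, pow_add, mul_assoc]
    rw [Finset.sum_congr rfl hstep, ← Finset.mul_sum, ih]
    have h2 : 2 * (n + 1) - 2 * (n + 1) = 0 := by omega
    rw [h2, pow_zero, one_mul]
    simp only [qNum]
    linear_combination q_key q (q ^ (n + 1)) h1
end

section
/- Let q be a complex number with q³ ≠ 1 and q ≠ 1, and let n be a nonnegative integer. Then Σ_{k=1}^{n} q^{3n−3k} · ( [k]_q · [k+1]_q )² · [2k+1]_q = ( [n]_q · [n+1]_q · [n+2]_q )² / [3]_q. -/
open BigOperators Finset

lemma q_step (q x : ℂ) (h1 : (1 : ℂ) - q ≠ 0) (h3 : (1 : ℂ) - q ^ 3 ≠ 0) :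
    q ^ 3 * (((1 - x) / (1 - q) * ((1 - x * q) / (1 - q)) * ((1 - x * q ^ 2) / (1 - q))) ^ 2
        / ((1 - q ^ 3) / (1 - q)))
      + ((1 - x * q) / (1 - q) * ((1 - x * q ^ 2) / (1 - q))) ^ 2
        * ((1 - x ^ 2 * q ^ 3) / (1 - q))
    = ((1 - x * q) / (1 - q) * ((1 - x * q ^ 2) / (1 - q)) * ((1 - x * q ^ 3) / (1 - q))) ^ 2
        / ((1 - q ^ 3) / (1 - q)) := by
  have hu : (1 - q) * (1 - q)⁻¹ = 1 := mul_inv_cancel₀ h1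
  have hw : (1 - q ^ 3) * (1 - q ^ 3)⁻¹ = 1 := mul_inv_cancel₀ h3
  have hkey : q ^ 3 * ((1 - x) * (1 - x * q) * (1 - x * q ^ 2)) ^ 2
      + ((1 - x * q) * (1 - x * q ^ 2)) ^ 2 * (1 - x ^ 2 * q ^ 3) * (1 - q ^ 3)
      = ((1 - x * q) * (1 - x * q ^ 2) * (1 - x * q ^ 3)) ^ 2 := by ring
  rw [div_div_eq_mul_div, div_div_eq_mul_div]
  linear_combination
    (q ^ 3 * ((1 - x) * (1 - x * q) * (1 - x * q ^ 2)) ^ 2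
        - ((1 - x * q) * (1 - x * q ^ 2) * (1 - x * q ^ 3)) ^ 2)
      * ((1 - q)⁻¹) ^ 5 * (1 - q ^ 3)⁻¹ * hu
    - ((1 - x * q) * (1 - x * q ^ 2)) ^ 2 * (1 - x ^ 2 * q ^ 3) * ((1 - q)⁻¹) ^ 5 * hw
    + ((1 - q)⁻¹) ^ 5 * (1 - q ^ 3)⁻¹ * hkey

theorem q_analogue_a_one_m_two (q : ℂ) (hq3 : q ^ 3 ≠ 1) (hq : q ≠ 1) (n : ℕ) :
    ∑ k ∈ Finset.Icc 1 n,
        q ^ (3 * n - 3 * k) * (qNum q k * qNum q (k + 1)) ^ 2 * qNum q (2 * k + 1) =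
      (qNum q n * qNum q (n + 1) * qNum q (n + 2)) ^ 2 / qNum q 3 := by
  have h1 : (1 : ℂ) - q ≠ 0 := sub_ne_zero.mpr (Ne.symm hq)
  have h3 : (1 : ℂ) - q ^ 3 ≠ 0 := sub_ne_zero.mpr (Ne.symm hq3)
  induction n with
  | zero => simp [qNum]
  | succ n ih =>
      rw [Finset.sum_Icc_succ_top (by omega : 1 ≤ n + 1)]
      have hshift : ∀ k ∈ Finset.Icc 1 n,
          q ^ (3 * (n + 1) - 3 * k) * (qNum q k * qNum q (k + 1)) ^ 2 * qNum q (2 * k + 1)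
          = q ^ 3 * (q ^ (3 * n - 3 * k) * (qNum q k * qNum q (k + 1)) ^ 2 * qNum q (2 * k + 1)) := by
        intro k hk
        simp only [Finset.mem_Icc] at hk
        have : 3 * (n + 1) - 3 * k = 3 + (3 * n - 3 * k) := by omega
        rw [this, pow_add]
        ring
      rw [Finset.sum_congr rfl hshift, ← Finset.mul_sum, ih]
      have e : 3 * (n + 1) - 3 * (n + 1) = 0 := by omega
      rw [e]
      simp only [qNum]
      have p1 : q ^ (n + 1) = q ^ n * q := by ring
      have p2 : q ^ (n + 1 + 1) = q ^ n * q ^ 2 := by ring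
      have p4 : q ^ (n + 1 + 2) = q ^ n * q ^ 3 := by ring
      have p5 : q ^ (2 * (n + 1) + 1) = (q ^ n) ^ 2 * q ^ 3 := by ring
      rw [p1, p2, p4, p5, pow_zero, one_mul]
      exact q_step q (q ^ n) h1 h3
end

section
/- Let q be a complex number with q³ ≠ 1 and q ≠ 1, and let n be a nonnegative integer. Then Σ_{k=1}^{n} q^{3n−3k} · [k]_q · [k+1]_q² · [k+2]_q · [2k+2]_q = ( [n]_q · [n+1]_q² · [n+2]_q² · [n+3]_q ) / [3]_q. -/
set_option maxHeartbeats 1000000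


open BigOperators Finset

theorem q_analogue_a_q_m_two (q : ℂ) (hq3 : q ^ 3 ≠ 1) (hq : q ≠ 1) (n : ℕ) :
    ∑ k ∈ Finset.Icc 1 n,
        q ^ (3 * n - 3 * k) * qNum q k * qNum q (k + 1) ^ 2 * qNum q (k + 2) *
          qNum q (2 * k + 2) =
      qNum q n * qNum q (n + 1) ^ 2 * qNum q (n + 2) ^ 2 * qNum q (n + 3) / qNum q 3 := by
  have h1 : (1 : ℂ) - q ≠ 0 := sub_ne_zero.mpr (Ne.symm hq)
  have h3 : (1 : ℂ) - q ^ 3 ≠ 0 := sub_ne_zero.mpr (Ne.symm hq3)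
  induction n with
  | zero => simp [qNum]
  | succ n ih =>
    rw [Finset.sum_Icc_succ_top (by omega : 1 ≤ n + 1)]
    have hshift : ∀ k ∈ Finset.Icc 1 n,
        q ^ (3 * (n + 1) - 3 * k) * qNum q k * qNum q (k + 1) ^ 2 * qNum q (k + 2) *
          qNum q (2 * k + 2)
        = q ^ 3 * (q ^ (3 * n - 3 * k) * qNum q k * qNum q (k + 1) ^ 2 * qNum q (k + 2) *
          qNum q (2 * k + 2)) := by
      intro k hk
      simp only [Finset.mem_Icc] at hk
      have : 3 * (n + 1) - 3 * k = 3 + (3 * n - 3 * k) := by omega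
      rw [this, pow_add]
      ring
    rw [Finset.sum_congr rfl hshift, ← Finset.mul_sum, ih]
    have e0 : 3 * (n + 1) - 3 * (n + 1) = 0 := by omega
    have e1 : 2 * (n + 1) + 2 = 2 * n + 4 := by omega
    rw [e0, e1]
    simp only [qNum]
    -- abbreviations for the numerators
    have hw : ((1 - q ^ 3) / (1 - q))⁻¹ * ((1 - q ^ 3) / (1 - q)) = 1 :=
      inv_mul_cancel₀ (div_ne_zero h3 h1)
    have keyc : q ^ 3 * ((1 - q ^ n) * (1 - q ^ (n + 1)) ^ 2 * (1 - q ^ (n + 2)) ^ 2 *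
          (1 - q ^ (n + 3)))
        + (1 - q ^ 3) * ((1 - q ^ (n + 1)) * (1 - q ^ (n + 2)) ^ 2 * (1 - q ^ (n + 3)) *
          (1 - q ^ (2 * n + 4)))
        = (1 - q ^ (n + 1)) * (1 - q ^ (n + 2)) ^ 2 * (1 - q ^ (n + 3)) ^ 2 *
          (1 - q ^ (n + 4)) := by
      ring
    linear_combination
      (((1 : ℂ) - q)⁻¹) ^ 6 * ((1 - q ^ 3) / (1 - q))⁻¹ * keyc
      - ((1 - q ^ (n + 1)) * (1 - q ^ (n + 2)) ^ 2 * (1 - q ^ (n + 3)) *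
          (1 - q ^ (2 * n + 4))) * (((1 : ℂ) - q)⁻¹) ^ 5 * hw
end
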